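/- arXiv:2602.06545 — 2 statements merged into one kernel-verified Lean document; each statement's English description precedes it below -/
import Mathlib

section
/- Monotonicity of the Stein solution: for every convex 1-Lipschitz function h : ℝ → ℝ, every μ ∈ ℝ and every σ > 0, the Stein solution f_{μ,σ,h} is nonincreasing on ℝ, i.e., f_{μ,σ,h}(x) ≥ f_{μ,σ,h}(y) whenever x ≤ y. -/
open MeasureTheory ProbabilityTheory Real Finset

/-- Expectation over a standard normal random variable `Z ∼ N(0,1)`. -/
noncomputable def gaussExp (f : ℝ → ℝ) : ℝ := ∫ z, f z ∂(gaussianReal 0 1)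

/-- Probability density function of the normal distribution `N(μ, σ²)`. -/
noncomputable def normalPdf (μ σ x : ℝ) : ℝ :=
  (Real.sqrt (2 * Real.pi * σ ^ 2))⁻¹ * Real.exp (-(x - μ) ^ 2 / (2 * σ ^ 2))

/-- The unique bounded solution `f_{μ,σ,h}` of the Stein equation
`σ² f′(x) − (x−μ) f(x) = h(x) − E_Z[h(μ+σZ)]`. -/
noncomputable def steinSol (μ σ : ℝ) (h : ℝ → ℝ) (x : ℝ) : ℝ :=
  (σ ^ 2 * normalPdf μ σ x)⁻¹ *
    ∫ z in Set.Iic x, (h z - gaussExp (fun w => h (μ + σ * w))) * normalPdf μ σ z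

namespace SteinAux

open Set Filter Topology

variable {μ σ : ℝ}

lemma normalPdf_eq (μ σ : ℝ) : normalPdf μ σ = gaussianPDFReal μ ⟨σ^2, sq_nonneg σ⟩ := rfl

lemma pdf_pos (hσ : 0 < σ) (x : ℝ) : 0 < normalPdf μ σ x := by
  unfold normalPdf; positivity

lemma pdf_nonneg (x : ℝ) : 0 ≤ normalPdf μ σ x := by
  unfold normalPdf; positivity

lemma pdf_cont : Continuous (normalPdf μ σ) := by
  unfold normalPdf; fun_prop

lemma integrable_pdf : Integrable (normalPdf μ σ) := by
  rw [normalPdf_eq]; exact integrable_gaussianPDFReal _ _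

lemma var_ne_zero (hσ : 0 < σ) : (⟨σ^2, sq_nonneg σ⟩ : NNReal) ≠ 0 := by
  intro hcon
  have := congrArg (NNReal.toReal) hcon
  exact (pow_pos hσ 2).ne' this

lemma integral_pdf (hσ : 0 < σ) : ∫ z, normalPdf μ σ z = 1 := by
  rw [normalPdf_eq]; exact integral_gaussianPDFReal_eq_one μ (var_ne_zero hσ)

lemma pdf_hasDeriv (hσ : 0 < σ) (x : ℝ) :
    HasDerivAt (normalPdf μ σ) (-((x - μ) / σ ^ 2) * normalPdf μ σ x) x := by
  have hσ2 : (σ:ℝ) ^ 2 ≠ 0 := (pow_pos hσ 2).ne'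
  have h1 : HasDerivAt (fun x : ℝ => -(x - μ) ^ 2 / (2 * σ ^ 2))
      (-(2 * (x - μ) ^ 1 * 1) / (2 * σ ^ 2)) x := by
    exact ((((hasDerivAt_id x).sub_const μ).pow 2).neg).div_const _
  have h2 := (h1.exp).const_mul ((Real.sqrt (2 * Real.pi * σ ^ 2))⁻¹)
  convert h2 using 1 <;> try rfl
  unfold normalPdf
  field_simp

lemma pdf_tendsto_bot (hσ : 0 < σ) : Tendsto (normalPdf μ σ) atBot (𝓝 0) := by
  have hσ2 : (0:ℝ) < 2 * σ ^ 2 := by positivity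
  have h1 : Tendsto (fun x : ℝ => -(x - μ) ^ 2 / (2 * σ ^ 2)) atBot atBot := by
    apply Tendsto.atBot_div_const hσ2
    have : Tendsto (fun x : ℝ => (x - μ) ^ 2) atBot atTop := by
      have hn : Tendsto (fun x : ℝ => -(x - μ)) atBot atTop := by
        have := tendsto_neg_atBot_atTop.comp
          (tendsto_atBot_add_const_right atBot (-μ) (tendsto_id (α := ℝ)))
        exact this.congr fun x => by simp [Function.comp]; ring
      have := (tendsto_pow_atTop (two_ne_zero)).comp hn
      refine this.congr fun x => ?_
      simp only [Function.comp_apply]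
      ring
    exact (tendsto_neg_atTop_atBot.comp this)
  have h2 : Tendsto (fun x : ℝ => Real.exp (-(x - μ) ^ 2 / (2 * σ ^ 2))) atBot (𝓝 0) :=
    Real.tendsto_exp_atBot.comp h1
  have h3 := h2.const_mul ((Real.sqrt (2 * Real.pi * σ ^ 2))⁻¹)
  rw [mul_zero] at h3
  exact h3

lemma pdf_tendsto_top (hσ : 0 < σ) : Tendsto (normalPdf μ σ) atTop (𝓝 0) := by
  have hσ2 : (0:ℝ) < 2 * σ ^ 2 := by positivity
  have h1 : Tendsto (fun x : ℝ => -(x - μ) ^ 2 / (2 * σ ^ 2)) atTop atBot := by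
    apply Tendsto.atBot_div_const hσ2
    have : Tendsto (fun x : ℝ => (x - μ) ^ 2) atTop atTop := by
      have hn : Tendsto (fun x : ℝ => x - μ) atTop atTop :=
        tendsto_atTop_add_const_right _ (-μ) tendsto_id
      exact (tendsto_pow_atTop (two_ne_zero)).comp hn
    exact (tendsto_neg_atTop_atBot.comp this)
  have h2 : Tendsto (fun x : ℝ => Real.exp (-(x - μ) ^ 2 / (2 * σ ^ 2))) atTop (𝓝 0) :=
    Real.tendsto_exp_atBot.comp h1
  have h3 := h2.const_mul ((Real.sqrt (2 * Real.pi * σ ^ 2))⁻¹)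
  rw [mul_zero] at h3
  exact h3

lemma integrable_sub_mul_pdf (hσ : 0 < σ) :
    Integrable (fun z => (z - μ) * normalPdf μ σ z) := by
  have hb : (0:ℝ) < (2 * σ ^ 2)⁻¹ := by positivity
  have h1 : Integrable (fun y : ℝ =>
      (Real.sqrt (2 * Real.pi * σ ^ 2))⁻¹ * (y * Real.exp (-(2 * σ ^ 2)⁻¹ * y ^ 2))) :=
    (integrable_mul_exp_neg_mul_sq hb).const_mul _
  have h2 := h1.comp_sub_right μ
  refine h2.congr (Filter.Eventually.of_forall fun z => ?_)
  simp only [normalPdf]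
  rw [show -(z - μ) ^ 2 / (2 * σ ^ 2) = -(2 * σ ^ 2)⁻¹ * (z - μ) ^ 2 by ring]
  ring

lemma intIic (hσ : 0 < σ) (x : ℝ) :
    ∫ z in Iic x, (z - μ) * normalPdf μ σ z = -(σ ^ 2 * normalPdf μ σ x) := by
  have hd : ∀ z ∈ Iic x, HasDerivAt (fun t => -(σ ^ 2 * normalPdf μ σ t))
      ((z - μ) * normalPdf μ σ z) z := by
    intro z _
    have := ((pdf_hasDeriv (μ := μ) hσ z).const_mul (σ ^ 2)).neg
    convert this using 1 <;> try rfl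
    field_simp [hσ.ne']
  have htb : Tendsto (fun t => -(σ ^ 2 * normalPdf μ σ t)) atBot (𝓝 0) := by
    have := ((pdf_tendsto_bot (μ := μ) hσ).const_mul (σ ^ 2)).neg
    simpa using this
  have := integral_Iic_of_hasDerivAt_of_tendsto' hd
    (integrable_sub_mul_pdf hσ).integrableOn htb
  simpa using this

lemma intIoi (hσ : 0 < σ) (x : ℝ) :
    ∫ z in Ioi x, (z - μ) * normalPdf μ σ z = σ ^ 2 * normalPdf μ σ x := by
  have hd : ∀ z ∈ Ici x, HasDerivAt (fun t => -(σ ^ 2 * normalPdf μ σ t))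
      ((z - μ) * normalPdf μ σ z) z := by
    intro z _
    have := ((pdf_hasDeriv (μ := μ) hσ z).const_mul (σ ^ 2)).neg
    convert this using 1 <;> try rfl
    field_simp [hσ.ne']
  have htt : Tendsto (fun t => -(σ ^ 2 * normalPdf μ σ t)) atTop (𝓝 0) := by
    have := ((pdf_tendsto_top (μ := μ) hσ).const_mul (σ ^ 2)).neg
    simpa using this
  have := integral_Ioi_of_hasDerivAt_of_tendsto' hd
    (integrable_sub_mul_pdf hσ).integrableOn htt
  simpa using this

lemma int_total (hσ : 0 < σ) : ∫ z, (z - μ) * normalPdf μ σ z = 0 := by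
  have := integral_add_compl (measurableSet_Iic (a := (0:ℝ)))
    (integrable_sub_mul_pdf (μ := μ) hσ)
  rw [Set.compl_Iic, intIic hσ 0, intIoi hσ 0] at this
  linarith

lemma gaussExp_eq (h : ℝ → ℝ) (hc : Continuous h) (hσ : 0 < σ) :
    gaussExp (fun w => h (μ + σ * w)) = ∫ z, h z * normalPdf μ σ z := by
  have hv := var_ne_zero (σ := σ) hσ
  have hmap1 : (gaussianReal 0 1).map (fun w => σ * w) = gaussianReal 0 ⟨σ^2, sq_nonneg σ⟩ := by
    have := gaussianReal_map_const_mul (μ := 0) (v := 1) σ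
    simp at this
    exact this
  have hmap2 : (gaussianReal 0 ⟨σ^2, sq_nonneg σ⟩).map (fun t => t + μ)
      = gaussianReal μ ⟨σ^2, sq_nonneg σ⟩ := by
    simpa using gaussianReal_map_add_const (μ := 0) (v := ⟨σ^2, sq_nonneg σ⟩) μ
  have h1 : gaussExp (fun w => h (μ + σ * w)) = ∫ z, h z ∂(gaussianReal μ ⟨σ^2, sq_nonneg σ⟩) := by
    rw [← hmap2, ← hmap1]
    rw [integral_map (by fun_prop) hc.aestronglyMeasurable,
      integral_map (by fun_prop)
        (show Continuous fun x : ℝ => h (x + μ) by fun_prop).aestronglyMeasurable]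
    simp only [gaussExp]
    congr 1
    ext w
    ring_nf
  rw [h1, gaussianReal_of_var_ne_zero μ hv]
  have hpdf : gaussianPDF μ ⟨σ^2, sq_nonneg σ⟩
      = fun x => ((gaussianPDFReal μ ⟨σ^2, sq_nonneg σ⟩ x).toNNReal : ENNReal) := rfl
  erw [hpdf, integral_withDensity_eq_integral_smul
    ((measurable_gaussianPDFReal _ _).real_toNNReal) h]
  congr 1
  ext z
  erw [NNReal.smul_def, smul_eq_mul, Real.coe_toNNReal _ (gaussianPDFReal_nonneg _ _ _),
    mul_comm, normalPdf_eq]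

lemma integrable_lip_mul (hσ : 0 < σ) {h : ℝ → ℝ} (hlip : LipschitzWith 1 h) :
    Integrable (fun z => h z * normalPdf μ σ z) := by
  have hint : Integrable (fun z => (|h μ|) * normalPdf μ σ z
      + |(z - μ) * normalPdf μ σ z|) :=
    ((integrable_pdf (μ := μ) (σ := σ)).const_mul _).add (integrable_sub_mul_pdf hσ).abs
  refine hint.mono ((hlip.continuous.mul pdf_cont).aestronglyMeasurable)
    (Filter.Eventually.of_forall fun z => ?_)
  have hb : |h z| ≤ |h μ| + |z - μ| := by
    have := hlip.dist_le_mul z μ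
    simp only [NNReal.coe_one, one_mul, Real.dist_eq] at this
    calc |h z| ≤ |h μ| + |h z - h μ| := by
          have := abs_sub_abs_le_abs_sub (h z) (h μ); linarith [abs_nonneg (h z - h μ)]
    _ ≤ |h μ| + |z - μ| := by linarith
  have h0 : (0:ℝ) ≤ normalPdf μ σ z := pdf_nonneg z
  have : ‖h z * normalPdf μ σ z‖ = |h z| * normalPdf μ σ z := by
    rw [Real.norm_eq_abs, abs_mul, abs_of_nonneg h0]
  rw [this]
  have h2 : |(z - μ) * normalPdf μ σ z| = |z - μ| * normalPdf μ σ z := by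
    rw [abs_mul, abs_of_nonneg h0]
  have h3 : ‖|h μ| * normalPdf μ σ z + |(z - μ) * normalPdf μ σ z|‖
      = |h μ| * normalPdf μ σ z + |(z - μ) * normalPdf μ σ z| := by
    rw [Real.norm_eq_abs, abs_of_nonneg]
    positivity
  rw [h3, h2]
  nlinarith [abs_nonneg (h z), abs_nonneg (z - μ)]

lemma exists_subgradient {h : ℝ → ℝ} (hconv : ConvexOn ℝ Set.univ h) (x : ℝ) :
    ∃ m : ℝ, ∀ z, h x + m * (z - x) ≤ h z := by
  set S := (fun w => (h w - h x) / (w - x)) '' Set.Ioi x with hS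
  have hne : S.Nonempty := ⟨_, ⟨x + 1, by simp, rfl⟩⟩
  have hlb : ∀ z, z < x → (h x - h z) / (x - z) ∈ lowerBounds S := by
    rintro z hz _ ⟨w, hw, rfl⟩
    exact hconv.slope_mono_adjacent (Set.mem_univ z) (Set.mem_univ w) hz hw
  have hbdd : BddBelow S := ⟨_, hlb (x - 1) (by linarith)⟩
  refine ⟨sInf S, fun z => ?_⟩
  rcases lt_trichotomy z x with hz | rfl | hz
  · have h1 : (h x - h z) / (x - z) ≤ sInf S := le_csInf hne (hlb z hz)
    rw [div_le_iff₀ (by linarith)] at h1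
    nlinarith
  · simp
  · have h1 : sInf S ≤ (h z - h x) / (z - x) := csInf_le hbdd ⟨z, hz, rfl⟩
    rw [le_div_iff₀ (by linarith)] at h1
    linarith

lemma F_hasDeriv (k : ℝ → ℝ) (hk : Continuous k)
    (hki : Integrable (fun z => k z * normalPdf μ σ z)) (x : ℝ) :
    HasDerivAt (fun t => ∫ z in Iic t, k z * normalPdf μ σ z)
      (k x * normalPdf μ σ x) x := by
  have heq : (fun t => ∫ z in Set.Iic t, k z * normalPdf μ σ z) =
      fun t => (∫ z in Set.Iic 0, k z * normalPdf μ σ z)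
        + ∫ z in (0:ℝ)..t, k z * normalPdf μ σ z := by
    funext t
    rw [← intervalIntegral.integral_Iic_sub_Iic hki.integrableOn hki.integrableOn]
    ring
  rw [heq]
  exact (((hk.mul pdf_cont).integral_hasStrictDerivAt 0 x).hasDerivAt).const_add _


lemma key_ineq {h : ℝ → ℝ} (hconv : ConvexOn ℝ Set.univ h) (hlip : LipschitzWith 1 h)
    (hσ : 0 < σ) (x : ℝ) :
    (x - μ) * (∫ z in Set.Iic x, (h z - gaussExp (fun w => h (μ + σ * w))) * normalPdf μ σ z)
      + σ ^ 2 * (h x - gaussExp (fun w => h (μ + σ * w))) * normalPdf μ σ x ≤ 0 := by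
  set c := gaussExp (fun w => h (μ + σ * w)) with hcdef
  have hc : c = ∫ z, h z * normalPdf μ σ z := gaussExp_eq h hlip.continuous hσ
  obtain ⟨m, hm⟩ := exists_subgradient hconv x
  have hφ : Integrable (normalPdf μ σ) := integrable_pdf
  have hzφ : Integrable (fun z => (z - μ) * normalPdf μ σ z) := integrable_sub_mul_pdf hσ
  have hhφ : Integrable (fun z => h z * normalPdf μ σ z) := integrable_lip_mul hσ hlip
  have hgφ : Integrable (fun z => (h z - c) * normalPdf μ σ z) := by
    have := hhφ.sub (hφ.const_mul c)
    refine this.congr (Filter.Eventually.of_forall fun z => ?_)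
    simp only [Pi.sub_apply]; ring
  have hlineInt : Integrable (fun z => (h x - c + m * (μ - x)) * normalPdf μ σ z
      + m * ((z - μ) * normalPdf μ σ z)) := (hφ.const_mul _).add (hzφ.const_mul m)
  have hpt : ∀ z, (h x - c + m * (μ - x)) * normalPdf μ σ z
      + m * ((z - μ) * normalPdf μ σ z) ≤ (h z - c) * normalPdf μ σ z := by
    intro z
    have h1 := mul_le_mul_of_nonneg_right (hm z) (pdf_nonneg (μ := μ) (σ := σ) z)
    nlinarith [h1]
  have h4 : ∫ z, (h z - c) * normalPdf μ σ z = 0 := by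
    have heq : ∫ z, (h z - c) * normalPdf μ σ z
        = (∫ z, h z * normalPdf μ σ z) - ∫ z, c * normalPdf μ σ z := by
      rw [← integral_sub hhφ (hφ.const_mul c)]
      congr 1; funext z; ring
    rw [heq, integral_const_mul, integral_pdf hσ, ← hc]; ring
  have hglob : h x + m * (μ - x) ≤ c := by
    have h2 : ∫ z, ((h x - c + m * (μ - x)) * normalPdf μ σ z
          + m * ((z - μ) * normalPdf μ σ z))
        ≤ ∫ z, (h z - c) * normalPdf μ σ z := integral_mono hlineInt hgφ hpt
    have h3 : ∫ z, ((h x - c + m * (μ - x)) * normalPdf μ σ z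
          + m * ((z - μ) * normalPdf μ σ z)) = h x - c + m * (μ - x) := by
      rw [integral_add (hφ.const_mul _) (hzφ.const_mul m), integral_const_mul,
        integral_const_mul, integral_pdf hσ, int_total hσ]
      ring
    rw [h3, h4] at h2; linarith
  have hfac : h x - c + m * (μ - x) ≤ 0 := by linarith
  have hsplit : (∫ z in Set.Iic x, (h z - c) * normalPdf μ σ z)
      + (∫ z in Set.Ioi x, (h z - c) * normalPdf μ σ z) = 0 := by
    have := integral_add_compl (measurableSet_Iic (a := x)) hgφ
    rw [Set.compl_Iic] at this
    exact this.trans h4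
  rcases le_total μ x with hxμ | hxμ
  · -- Case μ ≤ x : work on Ioi x
    have hmono : ∫ z in Set.Ioi x, ((h x - c + m * (μ - x)) * normalPdf μ σ z
        + m * ((z - μ) * normalPdf μ σ z))
        ≤ ∫ z in Set.Ioi x, (h z - c) * normalPdf μ σ z :=
      setIntegral_mono_on hlineInt.integrableOn hgφ.integrableOn measurableSet_Ioi
        (fun z _ => hpt z)
    have hval : ∫ z in Set.Ioi x, ((h x - c + m * (μ - x)) * normalPdf μ σ z
        + m * ((z - μ) * normalPdf μ σ z))
        = (h x - c + m * (μ - x)) * (∫ z in Set.Ioi x, normalPdf μ σ z)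
          + m * (σ ^ 2 * normalPdf μ σ x) := by
      rw [integral_add (hφ.const_mul _).integrableOn (hzφ.const_mul m).integrableOn,
        integral_const_mul, integral_const_mul, intIoi hσ]
    set P := ∫ z in Set.Ioi x, normalPdf μ σ z with hP
    have hR : (h x - c + m * (μ - x)) * P + m * (σ ^ 2 * normalPdf μ σ x)
        ≤ ∫ z in Set.Ioi x, (h z - c) * normalPdf μ σ z := by rw [← hval]; exact hmono
    have hA : 0 ≤ σ ^ 2 * normalPdf μ σ x - (x - μ) * P := by
      have heq : σ ^ 2 * normalPdf μ σ x - (x - μ) * P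
          = ∫ z in Set.Ioi x, ((z - μ) * normalPdf μ σ z - (x - μ) * normalPdf μ σ z) := by
        rw [integral_sub hzφ.integrableOn (hφ.const_mul _).integrableOn,
          integral_const_mul, intIoi hσ]
      rw [heq]
      refine setIntegral_nonneg measurableSet_Ioi fun z hz => ?_
      have hxz : (x:ℝ) < z := hz
      nlinarith [pdf_nonneg (μ := μ) (σ := σ) z]
    have hFx : (∫ z in Set.Iic x, (h z - c) * normalPdf μ σ z)
        = -(∫ z in Set.Ioi x, (h z - c) * normalPdf μ σ z) := by linarith
    have hstep : (x - μ) * (∫ z in Set.Iic x, (h z - c) * normalPdf μ σ z)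
        ≤ -((x - μ) * ((h x - c + m * (μ - x)) * P + m * (σ ^ 2 * normalPdf μ σ x))) := by
      rw [hFx]
      have := mul_le_mul_of_nonneg_left hR (by linarith : (0:ℝ) ≤ x - μ)
      linarith
    have hprod : (h x - c + m * (μ - x)) * (σ ^ 2 * normalPdf μ σ x - (x - μ) * P) ≤ 0 :=
      mul_nonpos_of_nonpos_of_nonneg hfac hA
    nlinarith [hstep, hprod]
  · -- Case x ≤ μ : work on Iic x
    have hmono : ∫ z in Set.Iic x, ((h x - c + m * (μ - x)) * normalPdf μ σ z
        + m * ((z - μ) * normalPdf μ σ z))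
        ≤ ∫ z in Set.Iic x, (h z - c) * normalPdf μ σ z :=
      setIntegral_mono_on hlineInt.integrableOn hgφ.integrableOn measurableSet_Iic
        (fun z _ => hpt z)
    have hval : ∫ z in Set.Iic x, ((h x - c + m * (μ - x)) * normalPdf μ σ z
        + m * ((z - μ) * normalPdf μ σ z))
        = (h x - c + m * (μ - x)) * (∫ z in Set.Iic x, normalPdf μ σ z)
          + m * (-(σ ^ 2 * normalPdf μ σ x)) := by
      rw [integral_add (hφ.const_mul _).integrableOn (hzφ.const_mul m).integrableOn,
        integral_const_mul, integral_const_mul, intIic hσ]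
    set Q := ∫ z in Set.Iic x, normalPdf μ σ z with hQ
    have hR : (h x - c + m * (μ - x)) * Q + m * (-(σ ^ 2 * normalPdf μ σ x))
        ≤ ∫ z in Set.Iic x, (h z - c) * normalPdf μ σ z := by rw [← hval]; exact hmono
    have hB : 0 ≤ σ ^ 2 * normalPdf μ σ x + (x - μ) * Q := by
      have heq : σ ^ 2 * normalPdf μ σ x + (x - μ) * Q
          = ∫ z in Set.Iic x, ((x - μ) * normalPdf μ σ z - (z - μ) * normalPdf μ σ z) := by
        rw [integral_sub (hφ.const_mul _).integrableOn hzφ.integrableOn,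
          integral_const_mul, intIic hσ]
        ring
      rw [heq]
      refine setIntegral_nonneg measurableSet_Iic fun z hz => ?_
      have hxz : z ≤ x := hz
      nlinarith [pdf_nonneg (μ := μ) (σ := σ) z]
    have hstep : (x - μ) * (∫ z in Set.Iic x, (h z - c) * normalPdf μ σ z)
        ≤ (x - μ) * ((h x - c + m * (μ - x)) * Q + m * (-(σ ^ 2 * normalPdf μ σ x))) := by
      have := mul_le_mul_of_nonpos_left hR (by linarith : x - μ ≤ 0)
      linarith
    have hprod : (h x - c + m * (μ - x)) * (σ ^ 2 * normalPdf μ σ x + (x - μ) * Q) ≤ 0 :=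
      mul_nonpos_of_nonpos_of_nonneg hfac hB
    nlinarith [hstep, hprod]

end SteinAux

/-- **Monotonicity of the Stein solution** (Lemma B.4): for every convex `1`-Lipschitz `h`,
every `μ ∈ ℝ` and `σ > 0`, the Stein solution `f_{μ,σ,h}` is nonincreasing. -/
theorem steinSol_antitone
    (h : ℝ → ℝ) (hconv : ConvexOn ℝ Set.univ h) (hlip : LipschitzWith 1 h)
    (μ σ : ℝ) (hσ : 0 < σ) :
    ∀ x y : ℝ, x ≤ y → steinSol μ σ h y ≤ steinSol μ σ h x := by
  intro x y hxy
  set c := gaussExp (fun w => h (μ + σ * w)) with hcdef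
  have hφ : Integrable (normalPdf μ σ) := SteinAux.integrable_pdf
  have hhφ : Integrable (fun z => h z * normalPdf μ σ z) := SteinAux.integrable_lip_mul hσ hlip
  have hgφ : Integrable (fun z => (h z - c) * normalPdf μ σ z) := by
    have := hhφ.sub (hφ.const_mul c)
    refine this.congr (Filter.Eventually.of_forall fun z => ?_)
    simp only [Pi.sub_apply]; ring
  have hD : ∀ t, HasDerivAt (steinSol μ σ h)
      (((t - μ) * (∫ z in Set.Iic t, (h z - c) * normalPdf μ σ z)
        + σ ^ 2 * (h t - c) * normalPdf μ σ t) / (σ ^ 4 * normalPdf μ σ t)) t := by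
    intro t
    have hφt : 0 < normalPdf μ σ t := SteinAux.pdf_pos hσ t
    have hinv : HasDerivAt (fun u => (σ ^ 2 * normalPdf μ σ u)⁻¹)
        (-(σ ^ 2 * (-((t - μ) / σ ^ 2) * normalPdf μ σ t)) / (σ ^ 2 * normalPdf μ σ t) ^ 2) t :=
      ((SteinAux.pdf_hasDeriv hσ t).const_mul (σ ^ 2)).inv (by positivity)
    have hF := SteinAux.F_hasDeriv (fun z => h z - c)
      (hlip.continuous.sub continuous_const) hgφ t
    have h1 := hinv.mul hF
    have h2 : steinSol μ σ h = fun u => (σ ^ 2 * normalPdf μ σ u)⁻¹ *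
        ∫ z in Set.Iic u, (h z - c) * normalPdf μ σ z := rfl
    rw [h2]
    convert h1 using 1 <;> try rfl
    have hσ' : (σ:ℝ) ≠ 0 := hσ.ne'
    have hφ' := hφt.ne'
    field_simp
  have hDle : ∀ t, ((t - μ) * (∫ z in Set.Iic t, (h z - c) * normalPdf μ σ z)
      + σ ^ 2 * (h t - c) * normalPdf μ σ t) / (σ ^ 4 * normalPdf μ σ t) ≤ 0 := by
    intro t
    have hnum := SteinAux.key_ineq (μ := μ) hconv hlip hσ t
    have hden : (0:ℝ) ≤ σ ^ 4 * normalPdf μ σ t := by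
      have := SteinAux.pdf_pos (μ := μ) hσ t
      positivity
    exact div_nonpos_of_nonpos_of_nonneg hnum hden
  exact antitone_of_deriv_nonpos (fun t => (hD t).differentiableAt)
    (fun t => by rw [(hD t).deriv]; exact hDle t) hxy
end

section
/- For all α > 0, E_Z[(1/α)·ln(cosh(αZ))] < α/2, where Z ∼ N(0,1); moreover lim_{α→∞} E_Z[(1/α)·ln(cosh(αZ))] = √(2/π). -/
open MeasureTheory ProbabilityTheory Real Filter

section Aux

open Set
open scoped ENNReal NNReal
set_option linter.unusedVariables false

private lemma sinh_lt_mul_cosh {t : ℝ} (ht : 0 < t) : Real.sinh t < t * Real.cosh t := by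
  have hmono : StrictMonoOn (fun x : ℝ => x * Real.cosh x - Real.sinh x) (Ici 0) := by
    refine strictMonoOn_of_deriv_pos (convex_Ici _) ?_ ?_
    · exact ((continuous_id.mul Real.continuous_cosh).sub Real.continuous_sinh).continuousOn
    · intro x hx
      rw [interior_Ici, mem_Ioi] at hx
      have h1 : HasDerivAt (fun x : ℝ => x * Real.cosh x - Real.sinh x)
          (1 * Real.cosh x + x * Real.sinh x - Real.cosh x) x :=
        ((hasDerivAt_id x).mul (Real.hasDerivAt_cosh x)).sub (Real.hasDerivAt_sinh x)
      rw [h1.deriv]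
      have : 0 < x * Real.sinh x := mul_pos hx (by rwa [Real.sinh_pos_iff])
      linarith
  have := hmono (self_mem_Ici) (le_of_lt ht : (0:ℝ) ≤ t) ht
  simpa using this

private lemma log_cosh_lt_half_sq {t : ℝ} (ht : t ≠ 0) : Real.log (Real.cosh t) < t ^ 2 / 2 := by
  have key : ∀ s : ℝ, 0 < s → Real.log (Real.cosh s) < s ^ 2 / 2 := by
    intro s hs
    have hmono : StrictMonoOn (fun x : ℝ => x ^ 2 / 2 - Real.log (Real.cosh x)) (Ici 0) := by
      refine strictMonoOn_of_deriv_pos (convex_Ici _) ?_ ?_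
      · exact ((continuous_pow 2).div_const 2).continuousOn.sub
          (Real.continuous_cosh.log (fun x => (Real.cosh_pos x).ne')).continuousOn
      · intro x hx
        rw [interior_Ici, mem_Ioi] at hx
        have h1 : HasDerivAt (fun x : ℝ => x ^ 2 / 2 - Real.log (Real.cosh x))
            ((2 * x ^ 1)/2 - Real.sinh x / Real.cosh x) x :=
          ((hasDerivAt_pow 2 x).div_const 2).sub
            ((Real.hasDerivAt_cosh x).log (Real.cosh_pos x).ne')
        rw [h1.deriv]
        have h2 : Real.sinh x / Real.cosh x < x :=
          (div_lt_iff₀ (Real.cosh_pos x)).2 (by simpa [mul_comm] using sinh_lt_mul_cosh hx)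
        simp only [pow_one]
        linarith
    have := hmono self_mem_Ici (le_of_lt hs : (0:ℝ) ≤ s) hs
    simp only [Real.cosh_zero, Real.log_one] at this
    linarith [this]
  rcases ht.lt_or_gt with h | h
  · have := key (-t) (by linarith)
    simpa using this
  · exact key t h

private lemma log_cosh_le_half_sq (t : ℝ) : Real.log (Real.cosh t) ≤ t ^ 2 / 2 := by
  rcases eq_or_ne t 0 with rfl | ht
  · simp
  · exact (log_cosh_lt_half_sq ht).le

private lemma log_cosh_nonneg (t : ℝ) : 0 ≤ Real.log (Real.cosh t) :=
  Real.log_nonneg (Real.one_le_cosh t)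

private lemma log_cosh_le_abs (t : ℝ) : Real.log (Real.cosh t) ≤ |t| := by
  have h : Real.cosh t ≤ Real.exp |t| := by
    have a : Real.exp t ≤ Real.exp |t| := Real.exp_le_exp.2 (le_abs_self t)
    have b : Real.exp (-t) ≤ Real.exp |t| := Real.exp_le_exp.2 (neg_le_abs t)
    rw [Real.cosh_eq]; linarith
  calc Real.log (Real.cosh t) ≤ Real.log (Real.exp |t|) :=
        Real.log_le_log (Real.cosh_pos t) h
    _ = |t| := Real.log_exp _

private lemma abs_sub_log_two_le_log_cosh (t : ℝ) : |t| - Real.log 2 ≤ Real.log (Real.cosh t) := by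
  have h : Real.exp |t| / 2 ≤ Real.cosh t := by
    rw [Real.cosh_eq]
    rcases abs_cases t with ⟨h1, _⟩ | ⟨h1, _⟩
    · rw [h1]; nlinarith [Real.exp_pos (-t)]
    · rw [h1]; nlinarith [Real.exp_pos t]
  have h2 : Real.log (Real.exp |t| / 2) ≤ Real.log (Real.cosh t) :=
    Real.log_le_log (by positivity) h
  rwa [Real.log_div (Real.exp_ne_zero _) two_ne_zero, Real.log_exp] at h2

private lemma gaussianPDF_eq_coe :
    gaussianPDF 0 1 = fun x => ((gaussianPDFReal 0 1 x).toNNReal : ℝ≥0∞) := rfl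

private lemma gauss_int (g : ℝ → ℝ) :
    ∫ z, g z ∂(gaussianReal 0 1) = ∫ x, gaussianPDFReal 0 1 x * g x := by
  rw [gaussianReal_of_var_ne_zero 0 one_ne_zero, gaussianPDF_eq_coe,
    integral_withDensity_eq_integral_smul (measurable_gaussianPDFReal 0 1).real_toNNReal g]
  congr 1; ext x
  simp [NNReal.smul_def, Real.coe_toNNReal _ (gaussianPDFReal_nonneg 0 1 x)]

private lemma gauss_integrable {g : ℝ → ℝ}
    (h : Integrable (fun x => gaussianPDFReal 0 1 x * g x) volume) :
    Integrable g (gaussianReal 0 1) := by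
  rw [gaussianReal_of_var_ne_zero 0 one_ne_zero, gaussianPDF_eq_coe,
    integrable_withDensity_iff_integrable_smul (measurable_gaussianPDFReal 0 1).real_toNNReal]
  convert h using 2 with x
  · rfl
  simp [NNReal.smul_def, Real.coe_toNNReal _ (gaussianPDFReal_nonneg 0 1 x)]

private lemma pdf01 (x : ℝ) :
    gaussianPDFReal 0 1 x = (Real.sqrt (2*π))⁻¹ * Real.exp (-x^2/2) := by
  simp [gaussianPDFReal]

private lemma integrable_sq_exp : Integrable (fun x : ℝ => x^2 * Real.exp (-x^2/2)) volume := by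
  have := integrable_rpow_mul_exp_neg_mul_sq (b := 1/2) (by norm_num) (s := 2) (by norm_num)
  convert this using 2 with x
  rw [show ((2:ℝ) = ((2:ℕ):ℝ)) by norm_num, Real.rpow_natCast]
  ring_nf

private lemma integrable_abs_exp : Integrable (fun x : ℝ => |x| * Real.exp (-x^2/2)) volume := by
  have := (integrable_rpow_mul_exp_neg_mul_sq (b := 1/2) (by norm_num) (s := 1) (by norm_num)).abs
  convert this using 2 with x
  rw [Real.rpow_one, abs_mul, abs_of_nonneg (Real.exp_pos _).le]
  ring_nf

private lemma int_Ioi_abs : ∫ x in Ioi (0:ℝ), x * Real.exp (-x^2/2) = 1 := by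
  have := integral_rpow_mul_exp_neg_mul_rpow (p := 2) (q := 1) (b := 1/2)
    (by norm_num) (by norm_num) (by norm_num)
  rw [show ((1:ℝ) + 1)/2 = 1 by norm_num, Real.Gamma_one] at this
  rw [show (-(1+1)/2 : ℝ) = -1 by norm_num, Real.rpow_neg_one] at this
  norm_num at this
  rw [← this]
  refine setIntegral_congr_fun measurableSet_Ioi (fun x hx => ?_)
  ring_nf

private lemma int_Ioi_sq : ∫ x in Ioi (0:ℝ), x^2 * Real.exp (-x^2/2) = Real.sqrt (2*π) / 2 := by
  have := integral_rpow_mul_exp_neg_mul_rpow (p := 2) (q := 2) (b := 1/2)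
    (by norm_num) (by norm_num) (by norm_num)
  have hG : Real.Gamma ((2+1)/2 : ℝ) = Real.sqrt π / 2 := by
    rw [show ((2:ℝ)+1)/2 = 1/2 + 1 by norm_num, Real.Gamma_add_one (by norm_num),
      Real.Gamma_one_half_eq]
    ring
  rw [hG] at this
  have hb : ((1:ℝ)/2) ^ (-(2+1)/2 : ℝ) = 2 * Real.sqrt 2 := by
    rw [show ((1:ℝ)/2) = 2⁻¹ by norm_num, Real.inv_rpow (by norm_num),
      ← Real.rpow_neg (by norm_num),
      show (-(-(2+1)/2) : ℝ) = 1 + 1/2 by norm_num,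
      Real.rpow_add (by norm_num), Real.rpow_one, ← Real.sqrt_eq_rpow]
  rw [hb] at this
  have h2 : ∫ x in Ioi (0:ℝ), x^2 * Real.exp (-x^2/2) =
      ∫ x in Ioi (0:ℝ), x ^ (2:ℝ) * Real.exp (-(1/2) * x ^ (2:ℝ)) := by
    refine setIntegral_congr_fun measurableSet_Ioi (fun x hx => ?_)
    rw [show ((2:ℝ) = ((2:ℕ):ℝ)) by norm_num, Real.rpow_natCast]
    ring_nf
  rw [h2, this, Real.sqrt_mul (by norm_num)]
  have hs2 : Real.sqrt 2 * Real.sqrt 2 = 2 := Real.mul_self_sqrt (by norm_num)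
  nlinarith [Real.sqrt_nonneg π, Real.sqrt_nonneg 2]

private lemma moment_abs : ∫ z, |z| ∂(gaussianReal 0 1) = Real.sqrt (2/π) := by
  rw [gauss_int]
  have h1 : (fun x : ℝ => gaussianPDFReal 0 1 x * |x|) =
      fun x => (Real.sqrt (2*π))⁻¹ * (|x| * Real.exp (-|x|^2/2)) := by
    funext x; rw [pdf01]; simp only [sq_abs]; ring
  rw [h1, integral_const_mul,
    integral_comp_abs (f := fun t => t * Real.exp (-t^2/2)), int_Ioi_abs]
  have hπ : (0:ℝ) < Real.sqrt π := Real.sqrt_pos.2 Real.pi_pos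
  have h2 : Real.sqrt (2*π) = Real.sqrt 2 * Real.sqrt π := Real.sqrt_mul (by norm_num) _
  have h3 : Real.sqrt (2/π) = Real.sqrt 2 / Real.sqrt π := Real.sqrt_div (by norm_num) π
  have hs2 : Real.sqrt 2 * Real.sqrt 2 = 2 := Real.mul_self_sqrt (by norm_num)
  have h2pos : (0:ℝ) < Real.sqrt 2 := Real.sqrt_pos.2 (by norm_num)
  rw [h2, h3, mul_one]
  field_simp
  nlinarith

private lemma moment_sq : ∫ z, (fun z => z^2) z ∂(gaussianReal 0 1) = 1 := by
  rw [gauss_int]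
  have h1 : (fun x : ℝ => gaussianPDFReal 0 1 x * x^2) =
      fun x => (Real.sqrt (2*π))⁻¹ * (|x|^2 * Real.exp (-|x|^2/2)) := by
    funext x; rw [pdf01]; simp only [sq_abs]; ring
  rw [h1, integral_const_mul,
    integral_comp_abs (f := fun t => t^2 * Real.exp (-t^2/2)), int_Ioi_sq]
  have hπ : (0:ℝ) < Real.sqrt (2*π) := Real.sqrt_pos.2 (by positivity)
  field_simp

private lemma int_abs_γ : Integrable (fun z : ℝ => |z|) (gaussianReal 0 1) := by
  apply gauss_integrable
  have h : (fun x : ℝ => gaussianPDFReal 0 1 x * |x|) =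
      fun x => (Real.sqrt (2*π))⁻¹ * (|x| * Real.exp (-x^2/2)) := by
    funext x; rw [pdf01]; ring
  rw [h]; exact integrable_abs_exp.const_mul _

private lemma int_sq_γ : Integrable (fun z : ℝ => z^2) (gaussianReal 0 1) := by
  apply gauss_integrable
  have h : (fun x : ℝ => gaussianPDFReal 0 1 x * x^2) =
      fun x => (Real.sqrt (2*π))⁻¹ * (x^2 * Real.exp (-x^2/2)) := by
    funext x; rw [pdf01]; ring
  rw [h]; exact integrable_sq_exp.const_mul _

private lemma cont_f (α : ℝ) : Continuous (fun z : ℝ => 1 / α * Real.log (Real.cosh (α * z))) :=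
  continuous_const.mul ((Real.continuous_cosh.comp (continuous_const.mul continuous_id)).log
    fun z => (Real.cosh_pos _).ne')

end Aux

/-- **Lemma E.1**: for all `α > 0`, `E_Z[α⁻¹ ln cosh(α Z)] < α/2`, and
`E_Z[α⁻¹ ln cosh(α Z)] → √(2/π)` as `α → ∞`. -/
theorem gaussExp_log_cosh_lt_and_tendsto :
    (∀ α : ℝ, 0 < α →
        gaussExp (fun z => 1 / α * Real.log (Real.cosh (α * z))) < α / 2) ∧
      Tendsto (fun α : ℝ => gaussExp (fun z => 1 / α * Real.log (Real.cosh (α * z))))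
        atTop (nhds (Real.sqrt (2 / Real.pi))) := by
  constructor
  · intro α hα
    show ∫ z, (1 / α * Real.log (Real.cosh (α * z))) ∂(gaussianReal 0 1) < α / 2
    set γ := gaussianReal 0 1 with hγ
    set f : ℝ → ℝ := fun z => 1 / α * Real.log (Real.cosh (α * z)) with hf
    set g : ℝ → ℝ := fun z => α / 2 * z ^ 2 with hg
    have hfg : ∀ z : ℝ, f z ≤ g z := by
      intro z
      have h1 : Real.log (Real.cosh (α * z)) ≤ (α * z) ^ 2 / 2 := log_cosh_le_half_sq _
      have h2 : (0:ℝ) < 1 / α := by positivity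
      calc f z ≤ 1 / α * ((α * z) ^ 2 / 2) := by
            exact mul_le_mul_of_nonneg_left h1 h2.le
        _ = g z := by field_simp [hg]; ring
    have hfg' : ∀ z : ℝ, z ≠ 0 → f z < g z := by
      intro z hz
      have h1 : Real.log (Real.cosh (α * z)) < (α * z) ^ 2 / 2 :=
        log_cosh_lt_half_sq (by positivity)
      have h2 : (0:ℝ) < 1 / α := by positivity
      calc f z < 1 / α * ((α * z) ^ 2 / 2) := by exact (mul_lt_mul_iff_right₀ h2).2 h1
        _ = g z := by field_simp [hg]; ring
    have hf0 : ∀ z : ℝ, 0 ≤ f z := fun z =>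
      mul_nonneg (by positivity) (log_cosh_nonneg _)
    have Ig : Integrable g γ := int_sq_γ.const_mul _
    have If : Integrable f γ := by
      refine Ig.mono ((cont_f α).aestronglyMeasurable) (ae_of_all _ fun z => ?_)
      rw [Real.norm_eq_abs, Real.norm_eq_abs, abs_of_nonneg (hf0 z),
        abs_of_nonneg (by positivity : (0:ℝ) ≤ α / 2 * z ^ 2)]
      exact hfg z
    have hIg : ∫ z, g z ∂γ = α / 2 := by
      rw [hg]
      rw [integral_const_mul, moment_sq, mul_one]
    have hpos : 0 < ∫ z, (g z - f z) ∂γ := by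
      rw [integral_pos_iff_support_of_nonneg_ae
        (ae_of_all _ fun z => sub_nonneg.2 (hfg z)) (Ig.sub If)]
      have hsub : ({0}ᶜ : Set ℝ) ⊆ Function.support (fun z => g z - f z) := by
        intro z hz
        exact (sub_pos.2 (hfg' z hz)).ne'
      have hsing : γ {0} = 0 :=
        gaussianReal_absolutelyContinuous 0 one_ne_zero (measure_singleton 0)
      have h0 : γ ({0}ᶜ : Set ℝ) = 1 := by
        rw [measure_compl (measurableSet_singleton 0) (measure_ne_top _ _), hsing,
          measure_univ, tsub_zero]
      calc (0:ENNReal) < 1 := by norm_num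
        _ = γ ({0}ᶜ : Set ℝ) := h0.symm
        _ ≤ γ (Function.support fun z => g z - f z) := measure_mono hsub
    rw [integral_sub Ig If, hIg] at hpos
    have : ∫ z, f z ∂γ < α / 2 := by linarith
    exact this
  · have hmoment := moment_abs
    simp only [gaussExp]
    rw [← hmoment]
    apply tendsto_integral_filter_of_dominated_convergence (bound := fun z : ℝ => |z|)
    · exact Eventually.of_forall fun α => (cont_f α).aestronglyMeasurable
    · filter_upwards [eventually_gt_atTop (0:ℝ)] with α hα
      refine ae_of_all _ fun z => ?_
      rw [Real.norm_eq_abs, abs_of_nonneg (mul_nonneg (by positivity) (log_cosh_nonneg _))]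
      calc 1 / α * Real.log (Real.cosh (α * z)) ≤ 1 / α * |α * z| :=
            mul_le_mul_of_nonneg_left (log_cosh_le_abs _) (by positivity)
        _ = |z| := by
            rw [abs_mul, abs_of_pos hα]; field_simp
    · exact int_abs_γ
    · refine ae_of_all _ fun z => ?_
      have hlow : Tendsto (fun α : ℝ => |z| - Real.log 2 / α) atTop (nhds |z|) := by
        have : Tendsto (fun α : ℝ => Real.log 2 / α) atTop (nhds 0) := by
          simpa [div_eq_mul_inv] using tendsto_inv_atTop_zero.const_mul (Real.log 2)
        simpa using tendsto_const_nhds.sub this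
      refine tendsto_of_tendsto_of_tendsto_of_le_of_le' hlow tendsto_const_nhds ?_ ?_
      · filter_upwards [eventually_gt_atTop (0:ℝ)] with α hα
        have h1 : |α * z| - Real.log 2 ≤ Real.log (Real.cosh (α * z)) :=
          abs_sub_log_two_le_log_cosh _
        have h2 : 1 / α * (|α * z| - Real.log 2) ≤ 1 / α * Real.log (Real.cosh (α * z)) :=
          mul_le_mul_of_nonneg_left h1 (by positivity)
        calc |z| - Real.log 2 / α = 1 / α * (|α * z| - Real.log 2) := by
              rw [abs_mul, abs_of_pos hα]; field_simp
          _ ≤ _ := h2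
      · filter_upwards [eventually_gt_atTop (0:ℝ)] with α hα
        calc 1 / α * Real.log (Real.cosh (α * z)) ≤ 1 / α * |α * z| :=
              mul_le_mul_of_nonneg_left (log_cosh_le_abs _) (by positivity)
          _ = |z| := by rw [abs_mul, abs_of_pos hα]; field_simp
end
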